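/- Let G = (V,E) be a finite simple bipartite graph and u, v ∈ V two vertices in the same connected component. If the distance d_G(u,v) is even then σ(G₋ᵤ)·σ(G₋ᵥ) < σ(G)·σ(G₋ᵤ₋ᵥ), and if d_G(u,v) is odd then σ(G₋ᵤ)·σ(G₋ᵥ) > σ(G)·σ(G₋ᵤ₋ᵥ). -/

import Mathlib

open scoped Classical

/-- The number of independent vertex sets of `G` avoiding the set `W`
(i.e. `σ(G₋W)`, the number of independent sets of `G` with `W` deleted). -/
noncomputable def sigmaDel {V : Type*} [Fintype V] (G : SimpleGraph V) (W : Set V) : ℕ :=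
  (Finset.univ.filter
    (fun s : Finset V => (∀ v ∈ s, v ∉ W) ∧ ∀ u ∈ s, ∀ v ∈ s, ¬ G.Adj u v)).card

/-- The number of independent vertex sets of `G`. -/
noncomputable def sigmaG {V : Type*} [Fintype V] (G : SimpleGraph V) : ℕ :=
  sigmaDel G ∅

namespace MSaux

open Finset
open scoped symmDiff

variable {V : Type*} [Fintype V]

/-- Independence predicate. -/
def Ind (G : SimpleGraph V) (s : Finset V) : Prop := ∀ a ∈ s, ∀ b ∈ s, ¬ G.Adj a b

/-- The subgraph of `G` induced (as a graph on `V`) by a finset `D`. -/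
def sub (G : SimpleGraph V) (D : Finset V) : SimpleGraph V where
  Adj a b := G.Adj a b ∧ a ∈ D ∧ b ∈ D
  symm := ⟨fun a b h => ⟨h.1.symm, h.2.2, h.2.1⟩⟩
  loopless := ⟨fun a h => G.loopless.irrefl a h.1⟩

lemma sub_adj {G : SimpleGraph V} {D : Finset V} {a b : V}
    (h : G.Adj a b) (ha : a ∈ D) (hb : b ∈ D) : (sub G D).Adj a b := ⟨h, ha, hb⟩

lemma sub_mono {G : SimpleGraph V} {D E : Finset V} (h : D ⊆ E) : sub G D ≤ sub G E :=
  fun _ _ hab => ⟨hab.1, h hab.2.1, h hab.2.2⟩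

lemma reach_of_support {G : SimpleGraph V} {D : Finset V} :
    ∀ {a b : V} (p : G.Walk a b), (∀ x ∈ p.support, x ∈ D) → (sub G D).Reachable a b := by
  intro a b p
  induction p with
  | nil => intro _; exact SimpleGraph.Reachable.refl _
  | cons hadj q ih =>
      intro h
      refine (SimpleGraph.Adj.reachable (sub_adj hadj (h _ (by simp)) (h _ (by simp)))).trans (ih ?_)
      intro x hx
      exact h x (by simp [hx])

lemma parity_lemma {H : SimpleGraph V} (f g : V → Bool)
    (hf : ∀ ⦃a b⦄, H.Adj a b → f a ≠ f b) (hg : ∀ ⦃a b⦄, H.Adj a b → g a ≠ g b)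
    {a b : V} (h : H.Reachable a b) : (f a = f b) ↔ (g a = g b) := by
  obtain ⟨p⟩ := h
  induction p with
  | nil => simp
  | cons hadj q ih =>
      have h1 := hf hadj
      have h2 := hg hadj
      have key : ∀ (x y z w t s : Bool), x ≠ y → z ≠ w → (y = t ↔ w = s) → (x = t ↔ z = s) := by
        decide
      exact key _ _ _ _ _ _ h1 h2 ih

lemma walk_parity {H : SimpleGraph V} (g : V → Bool)
    (hg : ∀ ⦃a b⦄, H.Adj a b → g a ≠ g b)
    {a b : V} (p : H.Walk a b) : Even p.length ↔ g a = g b := by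
  induction p with
  | nil => simp
  | cons hadj q ih =>
      have h2 := hg hadj
      rw [SimpleGraph.Walk.length_cons, Nat.even_add_one, ih]
      have key : ∀ x y z : Bool, x ≠ y → (¬(y = z) ↔ (x = z)) := by decide
      exact key _ _ _ h2

/-- The vertices of `S ∆ T` reachable from `u` inside `S ∆ T`. -/
noncomputable def Z (G : SimpleGraph V) (u : V) (S T : Finset V) : Finset V :=
  (S ∆ T).filter (fun x => (sub G (S ∆ T)).Reachable u x)

lemma mem_Z {G : SimpleGraph V} {u x : V} {S T : Finset V} :
    x ∈ Z G u S T ↔ x ∈ S ∆ T ∧ (sub G (S ∆ T)).Reachable u x := by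
  simp [Z]

lemma Z_comm (G : SimpleGraph V) (u : V) (S T : Finset V) : Z G u S T = Z G u T S := by
  rw [Z, Z, symmDiff_comm]

lemma ind_swap {G : SimpleGraph V} {u : V} {S T : Finset V}
    (hS : Ind G S) (hT : Ind G T) : Ind G (S ∆ Z G u S T) := by
  intro a ha b hb hab
  rw [Finset.mem_symmDiff] at ha hb
  have hmemT : ∀ x, x ∈ Z G u S T → x ∉ S → x ∈ T := by
    intro x hx hxS
    have := (mem_Z.1 hx).1
    rw [Finset.mem_symmDiff] at this
    tauto
  have step : ∀ x y, x ∈ S → x ∉ Z G u S T → y ∈ Z G u S T → y ∉ S → ¬ G.Adj x y := by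
    intro x y hxS hxZ hyZ hyS hxy
    obtain ⟨hyD, hyR⟩ := mem_Z.1 hyZ
    by_cases hxT : x ∈ T
    · exact hT x hxT y (hmemT y hyZ hyS) hxy
    · have hxD : x ∈ S ∆ T := by rw [Finset.mem_symmDiff]; tauto
      exact hxZ (mem_Z.2 ⟨hxD, hyR.trans (SimpleGraph.Adj.reachable (sub_adj hxy.symm hyD hxD))⟩)
  rcases ha with ⟨haS, haZ⟩ | ⟨haZ, haS⟩ <;> rcases hb with ⟨hbS, hbZ⟩ | ⟨hbZ, hbS⟩
  · exact hS a haS b hbS hab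
  · exact step a b haS haZ hbZ hbS hab
  · exact step b a hbS hbZ haZ haS hab.symm
  · exact hT a (hmemT a haZ haS) b (hmemT b hbZ hbS) hab

noncomputable def phi (G : SimpleGraph V) (u : V) (x : Finset V × Finset V) :
    Finset V × Finset V :=
  (x.1 ∆ Z G u x.1 x.2, x.2 ∆ Z G u x.1 x.2)

lemma symmDiff_phi (G : SimpleGraph V) (u : V) (x : Finset V × Finset V) :
    (phi G u x).1 ∆ (phi G u x).2 = x.1 ∆ x.2 := by
  show (x.1 ∆ Z G u x.1 x.2) ∆ (x.2 ∆ Z G u x.1 x.2) = x.1 ∆ x.2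
  rw [symmDiff_symmDiff_symmDiff_comm, symmDiff_self, symmDiff_bot]

lemma Z_phi (G : SimpleGraph V) (u : V) (x : Finset V × Finset V) :
    Z G u (phi G u x).1 (phi G u x).2 = Z G u x.1 x.2 := by
  rw [Z, Z, symmDiff_phi]

lemma phi_phi (G : SimpleGraph V) (u : V) (x : Finset V × Finset V) :
    phi G u (phi G u x) = x := by
  have hz := Z_phi G u x
  show ((phi G u x).1 ∆ Z G u (phi G u x).1 (phi G u x).2,
        (phi G u x).2 ∆ Z G u (phi G u x).1 (phi G u x).2) = x
  rw [hz]
  show (x.1 ∆ Z G u x.1 x.2 ∆ Z G u x.1 x.2, x.2 ∆ Z G u x.1 x.2 ∆ Z G u x.1 x.2) = x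
  rw [symmDiff_symmDiff_cancel_right, symmDiff_symmDiff_cancel_right]

lemma phi_mem {G : SimpleGraph V} {u v : V} {x : Finset V × Finset V}
    (h1 : Ind G x.1) (h2 : Ind G x.2) (hu : u ∈ x.1 ∆ x.2) (hv : v ∉ Z G u x.1 x.2) :
    Ind G (phi G u x).1 ∧ Ind G (phi G u x).2 ∧
    (u ∈ (phi G u x).1 ↔ u ∉ x.1) ∧ (u ∈ (phi G u x).2 ↔ u ∉ x.2) ∧
    (v ∈ (phi G u x).1 ↔ v ∈ x.1) ∧ (v ∈ (phi G u x).2 ↔ v ∈ x.2) ∧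
    v ∉ Z G u (phi G u x).1 (phi G u x).2 := by
  have huZ : u ∈ Z G u x.1 x.2 := mem_Z.2 ⟨hu, SimpleGraph.Reachable.refl u⟩
  have memswap : ∀ (S : Finset V) (y : V), y ∈ Z G u x.1 x.2 →
      (y ∈ S ∆ Z G u x.1 x.2 ↔ y ∉ S) := by
    intro S y hy
    rw [Finset.mem_symmDiff]
    constructor
    · rintro (⟨-, h⟩ | ⟨-, h⟩)
      · exact absurd hy h
      · exact h
    · intro h
      exact Or.inr ⟨hy, h⟩
  have memkeep : ∀ (S : Finset V) (y : V), y ∉ Z G u x.1 x.2 →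
      (y ∈ S ∆ Z G u x.1 x.2 ↔ y ∈ S) := by
    intro S y hy
    rw [Finset.mem_symmDiff]
    constructor
    · rintro (⟨h, -⟩ | ⟨h, -⟩)
      · exact h
      · exact absurd h hy
    · intro h
      exact Or.inl ⟨h, hy⟩
  have hu1 : (u ∈ (phi G u x).1 ↔ u ∉ x.1) := memswap x.1 u huZ
  have hu2 : (u ∈ (phi G u x).2 ↔ u ∉ x.2) := memswap x.2 u huZ
  have hv1 : (v ∈ (phi G u x).1 ↔ v ∈ x.1) := memkeep x.1 v hv
  have hv2 : (v ∈ (phi G u x).2 ↔ v ∈ x.2) := memkeep x.2 v hv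
  have hInd2 : Ind G (phi G u x).2 := by
    show Ind G (x.2 ∆ Z G u x.1 x.2)
    rw [Z_comm]
    exact ind_swap h2 h1
  refine ⟨ind_swap h1 h2, hInd2, hu1, hu2, hv1, hv2, ?_⟩
  rw [Z_phi]
  exact hv

lemma exists_witness {G : SimpleGraph V} (c : G.Coloring (Fin 2)) :
    ∀ {a b : V} (p : G.Walk a b), p.IsPath →
    ∃ S T : Finset V,
      (∀ y ∈ S, c y = c a) ∧ (∀ y ∈ T, c y ≠ c a) ∧
      (∀ y, (y ∈ S ∨ y ∈ T) → y ∈ p.support) ∧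
      Disjoint S T ∧ a ∈ S ∧
      (Even p.length → b ∈ S) ∧ (¬ Even p.length → b ∈ T) ∧
      (sub G (S ∆ T)).Reachable a b := by
  intro a b p
  induction p with
  | @nil a =>
      intro _
      refine ⟨{a}, ∅, by simp, by simp, by simp +contextual, by simp, by simp,
        fun _ => by simp, fun h => absurd Even.zero h, SimpleGraph.Reachable.refl _⟩
  | @cons a x b hadj q ih =>
      intro hp
      rw [SimpleGraph.Walk.cons_isPath_iff] at hp
      obtain ⟨S, T, hScol, hTcol, hsupp, hdisj, hxS, heven, hodd, hreach⟩ := ih hp.1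
      have haS : a ∉ S := fun h => hp.2 (hsupp a (Or.inl h))
      have haT : a ∉ T := fun h => hp.2 (hsupp a (Or.inr h))
      have hax : c a ≠ c x := c.valid hadj
      have fin2 : ∀ x y z : Fin 2, x ≠ z → y ≠ z → x = y := by decide
      refine ⟨insert a T, S, ?_, ?_, ?_, ?_, ?_, ?_, ?_, ?_⟩
      · intro y hy
        rcases Finset.mem_insert.1 hy with rfl | hy
        · rfl
        · exact fin2 _ _ _ (hTcol y hy) hax
      · intro y hy
        rw [hScol y hy]
        exact fun h => hax h.symm
      · intro y hy
        rw [SimpleGraph.Walk.support_cons]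
        rcases hy with hy | hy
        · rcases Finset.mem_insert.1 hy with rfl | hy
          · exact List.mem_cons_self
          · exact List.mem_cons_of_mem _ (hsupp y (Or.inr hy))
        · exact List.mem_cons_of_mem _ (hsupp y (Or.inl hy))
      · rw [Finset.disjoint_left]
        intro y hy hyS
        rcases Finset.mem_insert.1 hy with rfl | hy
        · exact haS hyS
        · exact (Finset.disjoint_right.1 hdisj hy) hyS
      · exact Finset.mem_insert_self a T
      · rw [SimpleGraph.Walk.length_cons, Nat.even_add_one]
        intro h
        exact Finset.mem_insert_of_mem (hodd h)
      · rw [SimpleGraph.Walk.length_cons, Nat.even_add_one, not_not]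
        exact heven
      · have hsub : S ∆ T ⊆ insert a T ∆ S := by
          intro y hy
          rw [Finset.mem_symmDiff] at hy ⊢
          rcases hy with ⟨hyS, hyT⟩ | ⟨hyT, hyS⟩
          · refine Or.inr ⟨hyS, fun h => ?_⟩
            rcases Finset.mem_insert.1 h with rfl | h
            · exact haS hyS
            · exact hyT h
          · exact Or.inl ⟨Finset.mem_insert_of_mem hyT, hyS⟩
        have haD : a ∈ insert a T ∆ S := by
          rw [Finset.mem_symmDiff]
          exact Or.inl ⟨Finset.mem_insert_self a T, haS⟩
        have hxD : x ∈ insert a T ∆ S := by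
          rw [Finset.mem_symmDiff]
          refine Or.inr ⟨hxS, fun h => ?_⟩
          rcases Finset.mem_insert.1 h with rfl | h
          · exact hp.2 (hsupp x (Or.inl hxS))
          · exact (Finset.disjoint_right.1 hdisj h) hxS
        exact (SimpleGraph.Adj.reachable (sub_adj hadj haD hxD)).trans
          (hreach.mono (sub_mono hsub))

lemma color_flip {G : SimpleGraph V} (c : G.Coloring (Fin 2)) :
    ∀ ⦃a b : V⦄, G.Adj a b → decide (c a = 0) ≠ decide (c b = 0) := by
  intro a b hab
  rw [ne_eq, decide_eq_decide]
  have := c.valid hab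
  have fin2 : ∀ x y : Fin 2, x ≠ y → ¬((x = 0) ↔ (y = 0)) := by decide
  exact fin2 _ _ this

lemma reach_color {G : SimpleGraph V} {u v : V} {S T : Finset V}
    (hS : Ind G S) (hT : Ind G T) (c : G.Coloring (Fin 2))
    (hv : v ∈ Z G u S T) : ((u ∈ S) ↔ (v ∈ S)) ↔ (c u = c v) := by
  obtain ⟨hvD, hreach⟩ := mem_Z.1 hv
  have hflipf : ∀ ⦃a b : V⦄, (sub G (S ∆ T)).Adj a b →
      (fun x => decide (x ∈ S)) a ≠ (fun x => decide (x ∈ S)) b := by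
    intro a b hab
    simp only [ne_eq, decide_eq_decide]
    intro hiff
    obtain ⟨hGab, haD, hbD⟩ := hab
    rw [Finset.mem_symmDiff] at haD hbD
    by_cases haS : a ∈ S
    · exact hS a haS b (hiff.1 haS) hGab
    · have haT : a ∈ T := by
        rcases haD with ⟨h, -⟩ | ⟨h, -⟩
        · exact absurd h haS
        · exact h
      have hbS : b ∉ S := fun h => haS (hiff.2 h)
      have hbT : b ∈ T := by
        rcases hbD with ⟨h, -⟩ | ⟨h, -⟩
        · exact absurd h hbS
        · exact h
      exact hT a haT b hbT hGab
  have hflipg : ∀ ⦃a b : V⦄, (sub G (S ∆ T)).Adj a b →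
      (fun x => decide (c x = 0)) a ≠ (fun x => decide (c x = 0)) b := by
    intro a b hab
    exact color_flip c hab.1
  have key := parity_lemma (H := sub G (S ∆ T)) (fun x => decide (x ∈ S))
    (fun x => decide (c x = 0)) hflipf hflipg hreach
  simp only [decide_eq_decide] at key
  have fin2 : ∀ x y : Fin 2, ((x = 0) ↔ (y = 0)) ↔ x = y := by decide
  rw [fin2] at key
  exact key

noncomputable def cnt {α : Type*} [Fintype α] (p : α → Prop) : ℕ :=
  (univ.filter p).card

lemma cnt_congr {α : Type*} [Fintype α] {p q : α → Prop} (h : ∀ x, p x ↔ q x) :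
    cnt p = cnt q := by
  unfold cnt
  congr 1
  ext x
  simp only [Finset.mem_filter, Finset.mem_univ, true_and]
  exact h x

lemma cnt_eq_card {α : Type*} [Fintype α] (p : α → Prop) [inst : DecidablePred p] :
    cnt p = (univ.filter p).card := by
  unfold cnt
  congr 1
  ext x
  simp

lemma sigma_eq (G : SimpleGraph V) (W : Set V) :
    sigmaDel G W = cnt (fun s : Finset V => Ind G s ∧ ∀ x ∈ s, x ∉ W) := by
  rw [sigmaDel, cnt]
  congr 1
  ext s
  simp only [Finset.mem_filter, Finset.mem_univ, true_and]
  unfold Ind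
  tauto

lemma card_filter_mul {α β : Type*} [Fintype α] [Fintype β] (p : α → Prop) (q : β → Prop) :
    cnt p * cnt q = cnt (fun x : α × β => p x.1 ∧ q x.2) := by
  rw [cnt_eq_card p, cnt_eq_card q, cnt_eq_card (fun x : α × β => p x.1 ∧ q x.2)]
  have h : (univ.filter p) ×ˢ (univ.filter q)
      = univ.filter (fun x : α × β => p x.1 ∧ q x.2) := by
    ext x
    simp [Finset.mem_product, Finset.mem_filter]
  rw [← h, Finset.card_product]

lemma card_split {α : Type*} [Fintype α] (p q : α → Prop) :
    cnt p = cnt (fun x => p x ∧ q x) + cnt (fun x => p x ∧ ¬ q x) := by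
  rw [cnt_eq_card p, cnt_eq_card (fun x => p x ∧ q x), cnt_eq_card (fun x => p x ∧ ¬ q x)]
  rw [← Finset.card_union_of_disjoint]
  · congr 1
    ext x
    simp only [Finset.mem_union, Finset.mem_filter, Finset.mem_univ, true_and]
    by_cases h : q x <;> tauto
  · rw [Finset.disjoint_left]
    intro a ha hb
    exact (Finset.mem_filter.1 hb).2.2 (Finset.mem_filter.1 ha).2.2

lemma key {G : SimpleGraph V} (c : G.Coloring (Fin 2)) {u v : V} (w : G.Walk u v) :
    (c u = c v → sigmaDel G {u} * sigmaDel G {v} < sigmaG G * sigmaDel G {u, v}) ∧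
    (c u ≠ c v → sigmaG G * sigmaDel G {u, v} < sigmaDel G {u} * sigmaDel G {v}) := by
  have fin2iff : ∀ x y : Fin 2, ((x = 0) ↔ (y = 0)) ↔ x = y := by decide
  have e1 : sigmaG G = (cnt (fun s : Finset V => Ind G s)) := by
    rw [sigmaG, sigma_eq]
    apply cnt_congr
    intro s
    constructor
    · rintro ⟨h1, -⟩
      exact h1
    · intro h1
      exact ⟨h1, fun x _ => Set.notMem_empty x⟩
  have e2 : sigmaDel G {u} = (cnt (fun s : Finset V => Ind G s ∧ u ∉ s)) := by
    rw [sigma_eq]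
    apply cnt_congr
    intro s
    simp only [Set.mem_singleton_iff]
    constructor
    · rintro ⟨h1, h2⟩
      exact ⟨h1, fun hu => h2 u hu rfl⟩
    · rintro ⟨h1, h2⟩
      exact ⟨h1, fun x hx hxu => h2 (hxu ▸ hx)⟩
  have e3 : sigmaDel G {v} = (cnt (fun s : Finset V => Ind G s ∧ v ∉ s)) := by
    rw [sigma_eq]
    apply cnt_congr
    intro s
    simp only [Set.mem_singleton_iff]
    constructor
    · rintro ⟨h1, h2⟩
      exact ⟨h1, fun hv => h2 v hv rfl⟩
    · rintro ⟨h1, h2⟩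
      exact ⟨h1, fun x hx hxv => h2 (hxv ▸ hx)⟩
  have e4 : sigmaDel G {u, v}
      = (cnt (fun s : Finset V => Ind G s ∧ u ∉ s ∧ v ∉ s)) := by
    rw [sigma_eq]
    apply cnt_congr
    intro s
    simp only [Set.mem_insert_iff, Set.mem_singleton_iff]
    constructor
    · rintro ⟨h1, h2⟩
      exact ⟨h1, fun hu => h2 u hu (Or.inl rfl), fun hv => h2 v hv (Or.inr rfl)⟩
    · rintro ⟨h1, h2, h3⟩
      refine ⟨h1, fun x hx hor => ?_⟩
      rcases hor with rfl | rfl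
      · exact h2 hx
      · exact h3 hx
  have hB : sigmaG G * sigmaDel G {u, v}
      = (cnt (fun x : Finset V × Finset V =>
          Ind G x.1 ∧ (Ind G x.2 ∧ u ∉ x.2 ∧ v ∉ x.2))) := by
    rw [e1, e4]
    exact card_filter_mul _ _
  have hA : sigmaDel G {u} * sigmaDel G {v}
      = (cnt (fun x : Finset V × Finset V =>
          (Ind G x.1 ∧ u ∉ x.1) ∧ (Ind G x.2 ∧ v ∉ x.2))) := by
    rw [e2, e3]
    exact card_filter_mul _ _
  have splitB : (cnt (fun x : Finset V × Finset V =>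
        Ind G x.1 ∧ (Ind G x.2 ∧ u ∉ x.2 ∧ v ∉ x.2)))
      = (cnt (fun x : Finset V × Finset V =>
          (Ind G x.1 ∧ (Ind G x.2 ∧ u ∉ x.2 ∧ v ∉ x.2)) ∧ u ∈ x.1))
        + (cnt (fun x : Finset V × Finset V =>
          (Ind G x.1 ∧ (Ind G x.2 ∧ u ∉ x.2 ∧ v ∉ x.2)) ∧ ¬ u ∈ x.1)) :=
    card_split _ _
  have splitA : (cnt (fun x : Finset V × Finset V =>
        (Ind G x.1 ∧ u ∉ x.1) ∧ (Ind G x.2 ∧ v ∉ x.2)))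
      = (cnt (fun x : Finset V × Finset V =>
          ((Ind G x.1 ∧ u ∉ x.1) ∧ (Ind G x.2 ∧ v ∉ x.2)) ∧ u ∈ x.2))
        + (cnt (fun x : Finset V × Finset V =>
          ((Ind G x.1 ∧ u ∉ x.1) ∧ (Ind G x.2 ∧ v ∉ x.2)) ∧ ¬ u ∈ x.2)) :=
    card_split _ _
  have hC : (cnt (fun x : Finset V × Finset V =>
        (Ind G x.1 ∧ (Ind G x.2 ∧ u ∉ x.2 ∧ v ∉ x.2)) ∧ ¬ u ∈ x.1))
      = (cnt (fun x : Finset V × Finset V =>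
        ((Ind G x.1 ∧ u ∉ x.1) ∧ (Ind G x.2 ∧ v ∉ x.2)) ∧ ¬ u ∈ x.2)) := by
    apply cnt_congr
    intro x
    tauto
  have splitP : (cnt (fun x : Finset V × Finset V =>
        (Ind G x.1 ∧ (Ind G x.2 ∧ u ∉ x.2 ∧ v ∉ x.2)) ∧ u ∈ x.1))
      = (cnt (fun x : Finset V × Finset V =>
          ((Ind G x.1 ∧ (Ind G x.2 ∧ u ∉ x.2 ∧ v ∉ x.2)) ∧ u ∈ x.1)
            ∧ v ∈ Z G u x.1 x.2))
        + (cnt (fun x : Finset V × Finset V =>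
          ((Ind G x.1 ∧ (Ind G x.2 ∧ u ∉ x.2 ∧ v ∉ x.2)) ∧ u ∈ x.1)
            ∧ ¬ v ∈ Z G u x.1 x.2)) :=
    card_split _ _
  have splitQ : (cnt (fun x : Finset V × Finset V =>
        ((Ind G x.1 ∧ u ∉ x.1) ∧ (Ind G x.2 ∧ v ∉ x.2)) ∧ u ∈ x.2))
      = (cnt (fun x : Finset V × Finset V =>
          (((Ind G x.1 ∧ u ∉ x.1) ∧ (Ind G x.2 ∧ v ∉ x.2)) ∧ u ∈ x.2)
            ∧ v ∈ Z G u x.1 x.2))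
        + (cnt (fun x : Finset V × Finset V =>
          (((Ind G x.1 ∧ u ∉ x.1) ∧ (Ind G x.2 ∧ v ∉ x.2)) ∧ u ∈ x.2)
            ∧ ¬ v ∈ Z G u x.1 x.2)) :=
    card_split _ _
  have hbij : (cnt (fun x : Finset V × Finset V =>
        ((Ind G x.1 ∧ (Ind G x.2 ∧ u ∉ x.2 ∧ v ∉ x.2)) ∧ u ∈ x.1)
          ∧ ¬ v ∈ Z G u x.1 x.2))
      = (cnt (fun x : Finset V × Finset V =>
        (((Ind G x.1 ∧ u ∉ x.1) ∧ (Ind G x.2 ∧ v ∉ x.2)) ∧ u ∈ x.2)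
          ∧ ¬ v ∈ Z G u x.1 x.2)) := by
    rw [cnt_eq_card, cnt_eq_card]
    apply Finset.card_nbij' (phi G u) (phi G u)
    · intro x hx
      simp only [Finset.mem_coe, Finset.mem_filter, Finset.mem_univ, true_and] at hx ⊢
      obtain ⟨⟨⟨h1, h2, hu2, hv2⟩, hu1⟩, hR⟩ := hx
      have huD : u ∈ x.1 ∆ x.2 := Finset.mem_symmDiff.2 (Or.inl ⟨hu1, hu2⟩)
      obtain ⟨i1, i2, iu1, iu2, iv1, iv2, iZ⟩ := phi_mem h1 h2 huD hR
      exact ⟨⟨⟨⟨i1, fun h => (iu1.1 h) hu1⟩, ⟨i2, fun h => hv2 (iv2.1 h)⟩⟩,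
        iu2.2 hu2⟩, iZ⟩
    · intro x hx
      simp only [Finset.mem_coe, Finset.mem_filter, Finset.mem_univ, true_and] at hx ⊢
      obtain ⟨⟨⟨⟨h1, hu1⟩, h2, hv2⟩, hu2⟩, hR⟩ := hx
      have huD : u ∈ x.1 ∆ x.2 := Finset.mem_symmDiff.2 (Or.inr ⟨hu2, hu1⟩)
      obtain ⟨i1, i2, iu1, iu2, iv1, iv2, iZ⟩ := phi_mem h1 h2 huD hR
      exact ⟨⟨⟨i1, ⟨i2, fun h => (iu2.1 h) hu2, fun h => hv2 (iv2.1 h)⟩⟩,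
        iu1.2 hu1⟩, iZ⟩
    · intro x _
      exact phi_phi G u x
    · intro x _
      exact phi_phi G u x
  constructor
  · -- even case
    intro hc
    have hQ1 : (cnt (fun x : Finset V × Finset V =>
        (((Ind G x.1 ∧ u ∉ x.1) ∧ (Ind G x.2 ∧ v ∉ x.2)) ∧ u ∈ x.2)
          ∧ v ∈ Z G u x.1 x.2)) = 0 := by
      rw [cnt_eq_card, Finset.card_eq_zero, Finset.filter_eq_empty_iff]
      rintro x - ⟨⟨⟨⟨h1, hu1⟩, h2, hv2⟩, hu2⟩, hR⟩
      have hcolor := reach_color h1 h2 c hR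
      have hv1 : v ∈ x.1 := by
        have hm := (mem_Z.1 hR).1
        rw [Finset.mem_symmDiff] at hm
        rcases hm with ⟨h, -⟩ | ⟨h, -⟩
        · exact h
        · exact absurd h hv2
      exact hu1 ((hcolor.2 hc).2 hv1)
    have hP1 : 0 < (cnt (fun x : Finset V × Finset V =>
        ((Ind G x.1 ∧ (Ind G x.2 ∧ u ∉ x.2 ∧ v ∉ x.2)) ∧ u ∈ x.1)
          ∧ v ∈ Z G u x.1 x.2)) := by
      rw [cnt_eq_card, Finset.card_pos]
      obtain ⟨S, T, hScol, hTcol, hsupp, hdisj, huS, heven, hodd, hreach⟩ :=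
        exists_witness c w.bypass w.bypass_isPath
      have hlen : Even w.bypass.length := by
        rw [walk_parity (fun x => decide (c x = 0)) (color_flip c) w.bypass,
          decide_eq_decide, fin2iff]
        exact hc
      have hvS := heven hlen
      have hvT : v ∉ T := Finset.disjoint_left.1 hdisj hvS
      have huT : u ∉ T := Finset.disjoint_left.1 hdisj huS
      have hIndS : Ind G S := by
        intro a ha b hb hab
        have hcv := c.valid hab
        rw [hScol a ha, hScol b hb] at hcv
        exact hcv rfl
      have hIndT : Ind G T := by
        intro a ha b hb hab
        have h2 : ∀ x y z : Fin 2, x ≠ z → y ≠ z → x = y := by decide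
        exact (c.valid hab) (h2 _ _ _ (hTcol a ha) (hTcol b hb))
      exact ⟨(S, T), Finset.mem_filter.2 ⟨Finset.mem_univ _,
        ⟨⟨hIndS, hIndT, huT, hvT⟩, huS⟩,
        mem_Z.2 ⟨Finset.mem_symmDiff.2 (Or.inl ⟨hvS, hvT⟩), hreach⟩⟩⟩
    omega
  · -- odd case
    intro hc
    have hP1 : (cnt (fun x : Finset V × Finset V =>
        ((Ind G x.1 ∧ (Ind G x.2 ∧ u ∉ x.2 ∧ v ∉ x.2)) ∧ u ∈ x.1)
          ∧ v ∈ Z G u x.1 x.2)) = 0 := by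
      rw [cnt_eq_card, Finset.card_eq_zero, Finset.filter_eq_empty_iff]
      rintro x - ⟨⟨⟨h1, h2, hu2, hv2⟩, hu1⟩, hR⟩
      have hcolor := reach_color h1 h2 c hR
      have hv1 : v ∈ x.1 := by
        have hm := (mem_Z.1 hR).1
        rw [Finset.mem_symmDiff] at hm
        rcases hm with ⟨h, -⟩ | ⟨h, -⟩
        · exact h
        · exact absurd h hv2
      exact hc (hcolor.1 ⟨fun _ => hv1, fun _ => hu1⟩)
    have hQ1 : 0 < (cnt (fun x : Finset V × Finset V =>
        (((Ind G x.1 ∧ u ∉ x.1) ∧ (Ind G x.2 ∧ v ∉ x.2)) ∧ u ∈ x.2)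
          ∧ v ∈ Z G u x.1 x.2)) := by
      rw [cnt_eq_card, Finset.card_pos]
      obtain ⟨S, T, hScol, hTcol, hsupp, hdisj, huS, heven, hodd, hreach⟩ :=
        exists_witness c w.bypass w.bypass_isPath
      have hlen : ¬ Even w.bypass.length := by
        rw [walk_parity (fun x => decide (c x = 0)) (color_flip c) w.bypass,
          decide_eq_decide, fin2iff]
        exact hc
      have hvT := hodd hlen
      have hvS : v ∉ S := Finset.disjoint_right.1 hdisj hvT
      have huT : u ∉ T := Finset.disjoint_left.1 hdisj huS
      have hIndS : Ind G S := by
        intro a ha b hb hab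
        have hcv := c.valid hab
        rw [hScol a ha, hScol b hb] at hcv
        exact hcv rfl
      have hIndT : Ind G T := by
        intro a ha b hb hab
        have h2 : ∀ x y z : Fin 2, x ≠ z → y ≠ z → x = y := by decide
        exact (c.valid hab) (h2 _ _ _ (hTcol a ha) (hTcol b hb))
      refine ⟨(T, S), Finset.mem_filter.2 ⟨Finset.mem_univ _,
        ⟨⟨⟨hIndT, huT⟩, hIndS, hvS⟩, huS⟩, ?_⟩⟩
      rw [Z_comm]
      exact mem_Z.2 ⟨Finset.mem_symmDiff.2 (Or.inr ⟨hvT, hvS⟩), hreach⟩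
    omega

end MSaux

theorem merrifield_simmons_bipartite {V : Type*} [Fintype V] (G : SimpleGraph V)
    (hbip : G.Colorable 2) (u v : V) (hconn : G.Reachable u v) :
    (Even (G.dist u v) →
      sigmaDel G {u} * sigmaDel G {v} < sigmaG G * sigmaDel G {u, v}) ∧
    (Odd (G.dist u v) →
      sigmaG G * sigmaDel G {u, v} < sigmaDel G {u} * sigmaDel G {v}) := by
  obtain ⟨c⟩ := hbip
  obtain ⟨p, hp⟩ := hconn.exists_walk_length_eq_dist
  have fin2iff : ∀ x y : Fin 2, ((x = 0) ↔ (y = 0)) ↔ x = y := by decide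
  have hpar : Even (G.dist u v) ↔ c u = c v := by
    rw [← hp, MSaux.walk_parity (fun x => decide (c x = 0)) (MSaux.color_flip c) p,
      decide_eq_decide, fin2iff]
  have hk := MSaux.key c p
  constructor
  · intro he
    exact hk.1 (hpar.1 he)
  · intro ho
    exact hk.2 (fun hc => (Nat.not_even_iff_odd.2 ho) (hpar.2 hc))
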